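/- Among all valid formats (m_1,…,m_r) for n players, with p < 1/2, the product ∏_{j=1}^r ((2m_j/r_j)p + 1 − 2m_j/r_j) is maximized by the format with one match each round, with value ∏_{j=1}^{n−1} ((2/(n−j+1))p + 1 − 2/(n−j+1)). -/

import Mathlib

/-- `ValidFormat n r m` : `m 0, …, m (r-1)` are the numbers of matches per round of a
knockout tournament format for `n` players. -/
def ValidFormat (n r : ℕ) (m : ℕ → ℕ) : Prop :=
  (∀ j < r, 0 < m j ∧ 2 * m j ≤ n - ∑ l ∈ Finset.range j, m l) ∧
  ∑ j ∈ Finset.range r, m j = n - 1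

/-- The product `∏_j (2 m_j / r_j · p + 1 − 2 m_j / r_j)` associated with a format. -/
noncomputable def formatProd (n r : ℕ) (m : ℕ → ℕ) (p : ℝ) : ℝ :=
  ∏ j ∈ Finset.range r,
    ((2 * m j / ((n : ℝ) - ∑ l ∈ Finset.range j, (m l : ℝ))) * p
      + 1 - 2 * m j / ((n : ℝ) - ∑ l ∈ Finset.range j, (m l : ℝ)))

lemma key_aux (q : ℝ) (hq1 : 1 ≤ q) (hq2 : q ≤ 2) :
    ∀ m s : ℕ, m < s →
      1 - q * m / s ≤ ∏ k ∈ Finset.range m, (1 - q / ((s : ℝ) - k)) := by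
  intro m
  induction m with
  | zero => intro s hs; simp
  | succ m ih =>
    intro s hs
    have hs2 : m + 2 ≤ s := hs
    have hsR : (m : ℝ) + 2 ≤ (s : ℝ) := by exact_mod_cast hs2
    have hS0 : (0 : ℝ) < s := by linarith
    have hS1 : (0 : ℝ) < (s : ℝ) - 1 := by linarith
    have hIH := ih (s - 1) (by omega)
    have hcast : ((s - 1 : ℕ) : ℝ) = (s : ℝ) - 1 := by
      have : 1 ≤ s := by omega
      push_cast [this]; ring
    rw [hcast] at hIH
    rw [Finset.prod_range_succ']
    have hre : ∏ k ∈ Finset.range m, (1 - q / ((s : ℝ) - (k + 1 : ℕ)))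
        = ∏ k ∈ Finset.range m, (1 - q / (((s : ℝ) - 1) - k)) := by
      refine Finset.prod_congr rfl fun k _ => ?_
      push_cast; ring_nf
    rw [hre]
    have hfac : (0 : ℝ) ≤ 1 - q / ((s : ℝ) - (0 : ℕ)) := by
      have : q / (s : ℝ) ≤ 1 := by
        rw [div_le_one hS0]; linarith
      simpa using this
    have hmul : (1 - q * m / ((s : ℝ) - 1)) * (1 - q / ((s : ℝ) - (0 : ℕ)))
        ≤ (∏ k ∈ Finset.range m, (1 - q / (((s : ℝ) - 1) - k))) * (1 - q / ((s : ℝ) - (0 : ℕ))) :=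
      mul_le_mul_of_nonneg_right hIH hfac
    refine le_trans ?_ hmul
    have hexp : (1 - q * m / ((s : ℝ) - 1)) * (1 - q / ((s : ℝ) - (0 : ℕ)))
        - (1 - q * (m + 1 : ℕ) / s) = q * m * (q - 1) / (((s : ℝ) - 1) * s) := by
      push_cast
      field_simp [hS0.ne']
      ring
    have hnn : (0 : ℝ) ≤ q * m * (q - 1) / (((s : ℝ) - 1) * s) := by
      apply div_nonneg
      · exact mul_nonneg (mul_nonneg (by linarith) (Nat.cast_nonneg m)) (by linarith)
      · positivity
    linarith [hexp, hnn]


lemma target_nonneg (q : ℝ) (hq0 : 0 ≤ q) (hq2 : q ≤ 2) (k : ℕ) :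
    0 ≤ ∏ j ∈ Finset.range (k - 1), (1 - q / ((k : ℝ) - j)) := by
  apply Finset.prod_nonneg
  intro j hj
  have hj' : j + 2 ≤ k := by
    have := Finset.mem_range.mp hj; omega
  have h2 : (2 : ℝ) ≤ (k : ℝ) - j := by
    have : (j : ℝ) + 2 ≤ (k : ℝ) := by exact_mod_cast hj'
    linarith
  have : q / ((k : ℝ) - j) ≤ 1 := by
    rw [div_le_one (by linarith)]; linarith
  linarith

lemma main_aux (q : ℝ) (hq1 : 1 ≤ q) (hq2 : q ≤ 2) :
    ∀ r n (m : ℕ → ℕ), ValidFormat n r m →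
      ∏ j ∈ Finset.range r,
          (1 - q * (m j : ℝ) / ((n : ℝ) - ∑ l ∈ Finset.range j, (m l : ℝ)))
        ≤ ∏ j ∈ Finset.range (n - 1), (1 - q / ((n : ℝ) - j)) := by
  intro r
  induction r with
  | zero =>
    intro n m hv
    have h1 : n - 1 = 0 := by
      have := hv.2; simpa using this.symm
    simp [h1]
  | succ r ih =>
    intro n m hv
    obtain ⟨hc, hsum⟩ := hv
    have h0 := hc 0 (by omega)
    have hm0pos : 0 < m 0 := h0.1
    have hm0n : 2 * m 0 ≤ n := by simpa using h0.2
    have hm0lt : m 0 < n := by omega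
    have hm0le : m 0 ≤ n := by omega
    set n' := n - m 0 with hn'
    have hn'pos : 1 ≤ n' := by omega
    -- sum over succ
    have hsum' : (∑ j ∈ Finset.range r, m (j + 1)) + m 0 = n - 1 := by
      rw [← Finset.sum_range_succ']; exact hsum
    have hn2 : 2 ≤ n := by omega
    -- valid format for the tail
    have hvf' : ValidFormat n' r (fun j => m (j + 1)) := by
      constructor
      · intro j hj
        have hcj := hc (j + 1) (by omega)
        refine ⟨hcj.1, ?_⟩
        show 2 * m (j + 1) ≤ n' - ∑ l ∈ Finset.range j, m (l + 1)
        have hs : ∑ l ∈ Finset.range (j + 1), m l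
            = (∑ l ∈ Finset.range j, m (l + 1)) + m 0 := Finset.sum_range_succ' m j
        have := hcj.2
        rw [hs] at this
        omega
      · show ∑ j ∈ Finset.range r, m (j + 1) = n' - 1
        omega
    have hIH := ih n' (fun j => m (j + 1)) hvf'
    -- rewrite LHS
    rw [Finset.prod_range_succ']
    have hcastn' : ((n' : ℕ) : ℝ) = (n : ℝ) - (m 0 : ℝ) := by
      rw [hn']; push_cast [hm0le]; ring
    have hre : ∏ j ∈ Finset.range r,
          (1 - q * (m (j + 1) : ℝ) / ((n : ℝ) - ∑ l ∈ Finset.range (j + 1), (m l : ℝ)))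
        = ∏ j ∈ Finset.range r,
          (1 - q * (m (j + 1) : ℝ) / ((n' : ℝ) - ∑ l ∈ Finset.range j, (m (l + 1) : ℝ))) := by
      refine Finset.prod_congr rfl fun j _ => ?_
      have : ∑ l ∈ Finset.range (j + 1), (m l : ℝ)
          = (∑ l ∈ Finset.range j, (m (l + 1) : ℝ)) + (m 0 : ℝ) :=
        Finset.sum_range_succ' (fun l => (m l : ℝ)) j
      rw [this, hcastn']
      ring
    rw [hre]
    -- split RHS
    have hsplit : n - 1 = m 0 + (n' - 1) := by omega
    rw [hsplit, Finset.prod_range_add]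
    have hre2 : ∏ j ∈ Finset.range (n' - 1), (1 - q / ((n : ℝ) - (m 0 + j : ℕ)))
        = ∏ j ∈ Finset.range (n' - 1), (1 - q / ((n' : ℝ) - j)) := by
      refine Finset.prod_congr rfl fun j _ => ?_
      rw [hcastn']
      push_cast
      ring_nf
    rw [hre2]
    -- key lemma for round 0
    have hkey := key_aux q hq1 hq2 (m 0) n hm0lt
    have hF0 : (1 : ℝ) - q * (m 0 : ℝ) / ((n : ℝ) - ∑ l ∈ Finset.range 0, (m l : ℝ))
        = 1 - q * (m 0) / n := by simp
    rw [hF0]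
    -- combine
    have hF0nn : (0 : ℝ) ≤ 1 - q * (m 0) / n := by
      have hnpos : (0 : ℝ) < n := by exact_mod_cast Nat.pos_of_ne_zero (by omega)
      have : q * (m 0 : ℝ) ≤ (n : ℝ) := by
        have h2m : (2 : ℝ) * (m 0 : ℝ) ≤ (n : ℝ) := by exact_mod_cast hm0n
        nlinarith [(Nat.cast_nonneg (m 0) : (0:ℝ) ≤ (m 0 : ℝ))]
      rw [sub_nonneg, div_le_one hnpos]
      exact this
    have htnn := target_nonneg q (by linarith) hq2 n'
    have hmm := mul_le_mul hIH hkey hF0nn htnn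
    exact le_trans hmm (le_of_eq (mul_comm _ _))


theorem stmt_12 (n : ℕ) (hn : 2 ≤ n) (p : ℝ) (hp : p ∈ Set.Ioo (0 : ℝ) (1/2)) :
    (∀ r : ℕ, ∀ m : ℕ → ℕ, ValidFormat n r m →
        formatProd n r m p ≤
          ∏ j ∈ Finset.range (n - 1), ((2/((n:ℝ) - j)) * p + 1 - 2/((n:ℝ) - j))) ∧
    formatProd n (n - 1) (fun _ => 1) p =
      ∏ j ∈ Finset.range (n - 1), ((2/((n:ℝ) - j)) * p + 1 - 2/((n:ℝ) - j)) := by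
  obtain ⟨hp0, hp2⟩ := hp
  set q : ℝ := 2 * (1 - p) with hq
  have hq1 : 1 ≤ q := by rw [hq]; linarith
  have hq2 : q ≤ 2 := by rw [hq]; linarith
  have hRHS : ∏ j ∈ Finset.range (n - 1), ((2/((n:ℝ) - j)) * p + 1 - 2/((n:ℝ) - j))
      = ∏ j ∈ Finset.range (n - 1), (1 - q / ((n : ℝ) - j)) := by
    refine Finset.prod_congr rfl fun j _ => ?_
    rw [hq]; ring
  constructor
  · intro r m hv
    have hL : formatProd n r m p = ∏ j ∈ Finset.range r,
        (1 - q * (m j : ℝ) / ((n : ℝ) - ∑ l ∈ Finset.range j, (m l : ℝ))) := by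
      unfold formatProd
      refine Finset.prod_congr rfl fun j _ => ?_
      rw [hq]; ring
    rw [hL, hRHS]
    exact main_aux q hq1 hq2 r n m hv
  · rw [hRHS]
    unfold formatProd
    refine Finset.prod_congr rfl fun j _ => ?_
    rw [hq]
    simp only [Nat.cast_one, Finset.sum_const, Finset.card_range, nsmul_eq_mul, mul_one]
    ring
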